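/- For any worms A, B in worm normal form with all modalities ≥ α, there exists a worm C with all modalities ≥ α such that GLP_Λ proves (A ∧ B) ↔ C; moreover, the modalities of C are among those of A and B, and the length of C is at most the sum of the lengths of A and B. -/

import Mathlib

inductive Formula (L : Type) : Type where
  | bot : Formula L
  | var : Nat → Formula L
  | imp : Formula L → Formula L → Formula L
  | box : L → Formula L → Formula L

namespace Formula

variable {L : Type}

def neg (φ : Formula L) : Formula L := imp φ bot
def top : Formula L := neg bot
def and (φ ψ : Formula L) : Formula L := neg (imp φ ψ.neg)
def or (φ ψ : Formula L) : Formula L := imp φ.neg ψ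
def iff (φ ψ : Formula L) : Formula L := (imp φ ψ).and (imp ψ φ)
def dia (α : L) (φ : Formula L) : Formula L := neg (box α φ.neg)

end Formula

open Formula

/-- Provability in the polymodal provability logic `GLP_Λ` over a linear order. -/
inductive GLP {L : Type} [LinearOrder L] : Formula L → Prop where
  | k1 : ∀ φ ψ : Formula L, GLP (φ.imp (ψ.imp φ))
  | k2 : ∀ φ ψ χ : Formula L, GLP ((φ.imp (ψ.imp χ)).imp ((φ.imp ψ).imp (φ.imp χ)))
  | k3 : ∀ φ ψ : Formula L, GLP ((φ.neg.imp ψ.neg).imp (ψ.imp φ))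
  | dist : ∀ (α : L) (φ ψ : Formula L), GLP ((Formula.box α (φ.imp ψ)).imp ((Formula.box α φ).imp (Formula.box α ψ)))
  | lob : ∀ (α : L) (φ : Formula L), GLP ((Formula.box α ((Formula.box α φ).imp φ)).imp (Formula.box α φ))
  | trans : ∀ (α β : L) (φ : Formula L), α ≤ β → GLP ((Formula.box α φ).imp (Formula.box β (Formula.box α φ)))
  | negintro : ∀ (α β : L) (φ : Formula L), α < β → GLP ((dia α φ).imp (Formula.box β (dia α φ)))
  | mono : ∀ (α β : L) (φ : Formula L), α ≤ β → GLP ((Formula.box α φ).imp (Formula.box β φ))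
  | mp : ∀ φ ψ : Formula L, GLP (φ.imp ψ) → GLP φ → GLP ψ
  | nec : ∀ (α : L) (φ : Formula L), GLP φ → GLP (Formula.box α φ)

/-- The worm (iterated consistency statement) associated to a list of modalities. -/
def worm {L : Type} : List L → Formula L
  | [] => Formula.top
  | α :: w => Formula.dia α (worm w)

/-- `Lt α A B` iff `GLP ⊢ B → ⟨α⟩A`. -/
def Lt {L : Type} [LinearOrder L] (α : L) (A B : List L) : Prop :=
  GLP ((worm B).imp (Formula.dia α (worm A)))

def Le {L : Type} [LinearOrder L] (α : L) (A B : List L) : Prop :=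
  Lt α A B ∨ A = B

/-- Join a list of blocks, separating consecutive blocks by the modality `α`. -/
def joinSep {L : Type} (α : L) : List (List L) → List L
  | [] => []
  | [p] => p
  | p :: ps => p ++ α :: joinSep α ps

/-- Worm normal form. -/
inductive WNF {L : Type} [LinearOrder L] [SuccOrder L] : List L → Prop where
  | nil : WNF []
  | node (α : L) (parts : List (List L))
      (hlen : 2 ≤ parts.length)
      (hmods : ∀ p ∈ parts, ∀ β ∈ p, α < β)
      (hwnf : ∀ p ∈ parts, WNF p)
      (hord : parts.Chain' (Le (Order.succ α)))
      : WNF (joinSep α parts)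

section PCsec

variable {L : Type} [LinearOrder L]

/-- Propositional consequence over GLP theorems, with a list of hypotheses. -/
inductive PC (Γ : List (Formula L)) : Formula L → Prop where
  | hyp : ∀ {φ}, φ ∈ Γ → PC Γ φ
  | glp : ∀ {φ}, GLP φ → PC Γ φ
  | mp : ∀ {φ ψ}, PC Γ (φ.imp ψ) → PC Γ φ → PC Γ ψ

theorem GLP.impRefl (φ : Formula L) : GLP (φ.imp φ) :=
  GLP.mp _ _ (GLP.mp _ _ (GLP.k2 φ (φ.imp φ) φ) (GLP.k1 φ (φ.imp φ))) (GLP.k1 φ φ)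

theorem PC.dt {Γ : List (Formula L)} {φ ψ : Formula L}
    (h : PC (φ :: Γ) ψ) : PC Γ (φ.imp ψ) := by
  induction h with
  | @hyp χ hm =>
    rcases List.mem_cons.1 hm with h | h
    · subst h; exact PC.glp (GLP.impRefl _)
    · exact PC.mp (PC.glp (GLP.k1 _ _)) (PC.hyp h)
  | glp h => exact PC.mp (PC.glp (GLP.k1 _ _)) (PC.glp h)
  | mp h1 h2 ih1 ih2 => exact PC.mp (PC.mp (PC.glp (GLP.k2 _ _ _)) ih1) ih2

theorem PC.toGLP {φ : Formula L} (h : PC ([] : List (Formula L)) φ) : GLP φ := by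
  induction h with
  | hyp hm => simp at hm
  | glp h => exact h
  | mp _ _ ih1 ih2 => exact GLP.mp _ _ ih1 ih2

theorem PC.hyp0 {Γ : List (Formula L)} {φ : Formula L} : PC (φ :: Γ) φ :=
  PC.hyp List.mem_cons_self

theorem PC.hyp1 {Γ : List (Formula L)} {φ ψ : Formula L} : PC (ψ :: φ :: Γ) φ :=
  PC.hyp (by simp)

theorem PC.hyp2 {Γ : List (Formula L)} {φ ψ χ : Formula L} : PC (χ :: ψ :: φ :: Γ) φ :=
  PC.hyp (by simp)

theorem GLP.impTrans {φ ψ χ : Formula L} (h1 : GLP (φ.imp ψ)) (h2 : GLP (ψ.imp χ)) :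
    GLP (φ.imp χ) :=
  PC.toGLP <| PC.dt <| PC.mp (PC.glp h2) (PC.mp (PC.glp h1) PC.hyp0)

theorem GLP.efq (φ : Formula L) : GLP (Formula.bot.imp φ) :=
  GLP.mp _ _ (GLP.k3 φ Formula.bot)
    (GLP.mp _ _ (GLP.k1 _ _) (GLP.impRefl Formula.bot))

theorem GLP.dni (φ : Formula L) : GLP (φ.imp φ.neg.neg) :=
  PC.toGLP <| PC.dt <| PC.dt <| PC.mp PC.hyp0 PC.hyp1

theorem GLP.dne (φ : Formula L) : GLP (φ.neg.neg.imp φ) :=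
  GLP.mp _ _ (GLP.k3 φ φ.neg.neg) (GLP.dni φ.neg)

theorem GLP.contrapose {φ ψ : Formula L} (h : GLP (φ.imp ψ)) : GLP (ψ.neg.imp φ.neg) :=
  PC.toGLP <| PC.dt <| PC.dt <| PC.mp PC.hyp1 (PC.mp (PC.glp h) PC.hyp0)

/-- `φ → (ψ → φ∧ψ)` -/
theorem GLP.andIntroImp (φ ψ : Formula L) : GLP (φ.imp (ψ.imp (φ.and ψ))) :=
  PC.toGLP <| PC.dt <| PC.dt <| PC.dt <|
    PC.mp (PC.mp PC.hyp0 PC.hyp2) PC.hyp1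

theorem GLP.andIntro {φ ψ : Formula L} (h1 : GLP φ) (h2 : GLP ψ) : GLP (φ.and ψ) :=
  GLP.mp _ _ (GLP.mp _ _ (GLP.andIntroImp φ ψ) h1) h2

/-- `φ∧ψ → φ` -/
theorem GLP.andLeft (φ ψ : Formula L) : GLP ((φ.and ψ).imp φ) := by
  have h1 : GLP (φ.neg.imp (φ.imp ψ.neg)) :=
    PC.toGLP <| PC.dt <| PC.dt <| PC.mp (PC.glp (GLP.efq ψ.neg)) (PC.mp PC.hyp1 PC.hyp0)
  have h2 : GLP ((φ.and ψ).imp φ.neg.neg) := GLP.contrapose h1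
  exact GLP.impTrans h2 (GLP.dne φ)

/-- `φ∧ψ → ψ` -/
theorem GLP.andRight (φ ψ : Formula L) : GLP ((φ.and ψ).imp ψ) := by
  have h1 : GLP (ψ.neg.imp (φ.imp ψ.neg)) := GLP.k1 _ _
  exact GLP.impTrans (GLP.contrapose h1) (GLP.dne ψ)

theorem GLP.impAnd {χ φ ψ : Formula L} (h1 : GLP (χ.imp φ)) (h2 : GLP (χ.imp ψ)) :
    GLP (χ.imp (φ.and ψ)) :=
  PC.toGLP <| PC.dt <|
    PC.mp (PC.mp (PC.glp (GLP.andIntroImp φ ψ)) (PC.mp (PC.glp h1) PC.hyp0))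
      (PC.mp (PC.glp h2) PC.hyp0)

theorem GLP.iffIntro {φ ψ : Formula L} (h1 : GLP (φ.imp ψ)) (h2 : GLP (ψ.imp φ)) :
    GLP (φ.iff ψ) := GLP.andIntro h1 h2

theorem GLP.iffMp {φ ψ : Formula L} (h : GLP (φ.iff ψ)) : GLP (φ.imp ψ) :=
  GLP.mp _ _ (GLP.andLeft _ _) h

theorem GLP.iffMpr {φ ψ : Formula L} (h : GLP (φ.iff ψ)) : GLP (ψ.imp φ) :=
  GLP.mp _ _ (GLP.andRight _ _) h

theorem GLP.iffTrans {φ ψ χ : Formula L} (h1 : GLP (φ.iff ψ)) (h2 : GLP (ψ.iff χ)) :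
    GLP (φ.iff χ) :=
  GLP.iffIntro (GLP.impTrans (GLP.iffMp h1) (GLP.iffMp h2))
    (GLP.impTrans (GLP.iffMpr h2) (GLP.iffMpr h1))

theorem GLP.iffSymm {φ ψ : Formula L} (h : GLP (φ.iff ψ)) : GLP (ψ.iff φ) :=
  GLP.iffIntro (GLP.iffMpr h) (GLP.iffMp h)

theorem GLP.top' : GLP (Formula.top : Formula L) := GLP.impRefl _

theorem GLP.impTop (φ : Formula L) : GLP (φ.imp Formula.top) :=
  GLP.mp _ _ (GLP.k1 _ _) GLP.top'

end PCsec
section Modal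

variable {L : Type} [LinearOrder L]

theorem GLP.boxImp {φ ψ : Formula L} (α : L) (h : GLP (φ.imp ψ)) :
    GLP ((Formula.box α φ).imp (Formula.box α ψ)) :=
  GLP.mp _ _ (GLP.dist α φ ψ) (GLP.nec α _ h)

theorem GLP.diaImp {φ ψ : Formula L} (α : L) (h : GLP (φ.imp ψ)) :
    GLP ((dia α φ).imp (dia α ψ)) :=
  GLP.contrapose (GLP.boxImp α (GLP.contrapose h))

theorem GLP.diaIff {φ ψ : Formula L} (α : L) (h : GLP (φ.iff ψ)) :
    GLP ((dia α φ).iff (dia α ψ)) :=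
  GLP.iffIntro (GLP.diaImp α (GLP.iffMp h)) (GLP.diaImp α (GLP.iffMpr h))

/-- transitivity: `⟨α⟩⟨α⟩φ → ⟨α⟩φ` -/
theorem GLP.diaTrans (α : L) (φ : Formula L) :
    GLP ((dia α (dia α φ)).imp (dia α φ)) := by
  have h4 : GLP ((Formula.box α φ.neg).imp (Formula.box α (Formula.box α φ.neg))) :=
    GLP.trans α α φ.neg le_rfl
  have h5 : GLP ((Formula.box α (Formula.box α φ.neg)).imp (Formula.box α ((dia α φ).neg))) :=
    GLP.boxImp α (GLP.dni _)
  exact GLP.contrapose (GLP.impTrans h4 h5)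

/-- `⟨β⟩φ → ⟨α⟩φ` for `α ≤ β` -/
theorem GLP.diaLE {α β : L} (h : α ≤ β) (φ : Formula L) :
    GLP ((dia β φ).imp (dia α φ)) :=
  GLP.contrapose (GLP.mono α β φ.neg h)

/-- `⟨β⟩φ ∧ [β]ψ → ⟨β⟩(φ∧ψ)` -/
theorem GLP.diaBoxAnd (β : L) (φ ψ : Formula L) :
    GLP (((dia β φ).and (Formula.box β ψ)).imp (dia β (φ.and ψ))) := by
  have h1 : GLP (ψ.imp (((φ.and ψ).neg).imp φ.neg)) :=
    PC.toGLP <| PC.dt <| PC.dt <| PC.dt <|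
      PC.mp PC.hyp1 (PC.mp (PC.mp (PC.glp (GLP.andIntroImp φ ψ)) PC.hyp0) PC.hyp2)
  have h2 : GLP ((Formula.box β ψ).imp ((Formula.box β ((φ.and ψ).neg)).imp (Formula.box β φ.neg))) :=
    GLP.impTrans (GLP.boxImp β h1) (GLP.dist β _ _)
  -- now propositional assembly
  have hmain : PC [Formula.box β ((φ.and ψ).neg), (dia β φ).and (Formula.box β ψ)]
      (Formula.bot : Formula L) := by
    have hH : PC [Formula.box β ((φ.and ψ).neg), (dia β φ).and (Formula.box β ψ)]
        ((dia β φ).and (Formula.box β ψ)) := PC.hyp1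
    have hK : PC [Formula.box β ((φ.and ψ).neg), (dia β φ).and (Formula.box β ψ)]
        (Formula.box β ((φ.and ψ).neg)) := PC.hyp0
    have hb := PC.mp (PC.glp (GLP.andRight (dia β φ) (Formula.box β ψ))) hH
    have hd := PC.mp (PC.glp (GLP.andLeft (dia β φ) (Formula.box β ψ))) hH
    exact PC.mp hd (PC.mp (PC.mp (PC.glp h2) hb) hK)
  exact PC.toGLP <| PC.dt <| PC.dt hmain

/-- Lemma J: for `δ < ε`, `⟨ε⟩φ ∧ ⟨δ⟩ψ → ⟨ε⟩(φ ∧ ⟨δ⟩ψ)`. -/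
theorem GLP.lemJ {δ ε : L} (h : δ < ε) (φ ψ : Formula L) :
    GLP (((dia ε φ).and (dia δ ψ)).imp (dia ε (φ.and (dia δ ψ)))) := by
  have hn : GLP ((dia δ ψ).imp (Formula.box ε (dia δ ψ))) := GLP.negintro δ ε ψ h
  have h1 : GLP (((dia ε φ).and (dia δ ψ)).imp ((dia ε φ).and (Formula.box ε (dia δ ψ)))) :=
    GLP.impAnd (GLP.andLeft _ _) (GLP.impTrans (GLP.andRight _ _) hn)
  exact GLP.impTrans h1 (GLP.diaBoxAnd ε φ (dia δ ψ))

/-- Lemma 1: for `δ < β`, `⟨β⟩(φ ∧ ⟨δ⟩ψ) ↔ ⟨β⟩φ ∧ ⟨δ⟩ψ`. -/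
theorem GLP.lem1 {δ β : L} (h : δ < β) (φ ψ : Formula L) :
    GLP ((dia β (φ.and (dia δ ψ))).iff ((dia β φ).and (dia δ ψ))) := by
  refine GLP.iffIntro ?_ (GLP.lemJ h φ ψ)
  refine GLP.impAnd (GLP.diaImp β (GLP.andLeft _ _)) ?_
  have h1 : GLP ((dia β (φ.and (dia δ ψ))).imp (dia β (dia δ ψ))) :=
    GLP.diaImp β (GLP.andRight _ _)
  have h2 : GLP ((dia β (dia δ ψ)).imp (dia δ (dia δ ψ))) := GLP.diaLE h.le _
  exact GLP.impTrans (GLP.impTrans h1 h2) (GLP.diaTrans δ ψ)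

end Modal
section Worms

variable {L : Type} [LinearOrder L]

@[simp] theorem worm_nil : worm ([] : List L) = Formula.top := rfl
@[simp] theorem worm_cons (x : L) (w : List L) : worm (x :: w) = dia x (worm w) := rfl

theorem GLP.wormTop (X : List L) : GLP ((worm X).imp Formula.top) := GLP.impTop _

/-- initial segments are implied -/
theorem GLP.wormPrefix (X Z : List L) : GLP ((worm (X ++ Z)).imp (worm X)) := by
  induction X with
  | nil => exact GLP.impTop _
  | cons x X ih => exact GLP.diaImp x ih

/-- `worm (X ++ δ::Y) → ⟨δ⟩ worm Y` when all modalities of `X` are `≥ δ`. -/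
theorem GLP.wormSuffix {δ : L} {X : List L} (hX : ∀ β ∈ X, δ ≤ β) (Y : List L) :
    GLP ((worm (X ++ δ :: Y)).imp (dia δ (worm Y))) := by
  induction X with
  | nil => exact GLP.impRefl _
  | cons x X ih =>
    have hx : δ ≤ x := hX x (by simp)
    have h1 : GLP ((worm (x :: X ++ δ :: Y)).imp (dia x (dia δ (worm Y)))) :=
      GLP.diaImp x (ih fun β hβ => hX β (by simp [hβ]))
    exact GLP.impTrans (GLP.impTrans h1 (GLP.diaLE hx _)) (GLP.diaTrans δ _)

/-- Lemma 2 (splitting): if all modalities of `P` are `> δ` then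
`worm (P ++ δ::Q) ↔ worm P ∧ ⟨δ⟩ worm Q`. -/
theorem GLP.wormSplit {δ : L} {P : List L} (hP : ∀ β ∈ P, δ < β) (Q : List L) :
    GLP ((worm (P ++ δ :: Q)).iff ((worm P).and (dia δ (worm Q)))) := by
  induction P with
  | nil =>
    refine GLP.iffIntro (GLP.impAnd (GLP.impTop _) (GLP.impRefl _)) ?_
    exact GLP.andRight _ _
  | cons x P ih =>
    have hx : δ < x := hP x (by simp)
    have ih' := ih fun β hβ => hP β (by simp [hβ])
    have h1 : GLP ((worm (x :: P ++ δ :: Q)).iff (dia x ((worm P).and (dia δ (worm Q))))) :=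
      GLP.diaIff x ih'
    exact GLP.iffTrans h1 (GLP.lem1 hx _ _)

@[simp] theorem joinSep_nil (δ : L) : joinSep δ ([] : List (List L)) = [] := rfl
@[simp] theorem joinSep_single (δ : L) (p : List L) : joinSep δ [p] = p := rfl

theorem joinSep_cons (δ : L) (p : List L) {ps : List (List L)} (h : ps ≠ []) :
    joinSep δ (p :: ps) = p ++ δ :: joinSep δ ps := by
  cases ps with
  | nil => exact absurd rfl h
  | cons q qs => rfl

theorem joinSep_append (δ : L) {xs ys : List (List L)} (hx : xs ≠ []) (hy : ys ≠ []) :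
    joinSep δ (xs ++ ys) = joinSep δ xs ++ δ :: joinSep δ ys := by
  induction xs with
  | nil => exact absurd rfl hx
  | cons p xs ih =>
    cases xs with
    | nil =>
      simp [joinSep_cons δ p (by simpa using hy)]
    | cons q qs =>
      rw [List.cons_append, joinSep_cons δ p (ps := q :: qs ++ ys) (by simp),
        joinSep_cons δ p (ps := q :: qs) (by simp), ih (by simp)]
      simp

theorem mem_joinSep {δ : L} {ps : List (List L)} {x : L} (h : x ∈ joinSep δ ps) :
    x = δ ∨ ∃ p ∈ ps, x ∈ p := by
  induction ps with
  | nil => simp at h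
  | cons p ps ih =>
    cases ps with
    | nil => exact Or.inr ⟨p, by simpa using h⟩
    | cons q qs =>
      rw [joinSep_cons δ p (by simp)] at h
      rcases List.mem_append.1 h with h | h
      · exact Or.inr ⟨p, by simp, h⟩
      · rcases List.mem_cons.1 h with h | h
        · exact Or.inl h
        · rcases ih h with h | ⟨r, hr, hx⟩
          · exact Or.inl h
          · exact Or.inr ⟨r, by simp [hr], hx⟩

theorem mem_joinSep_of_mem {δ : L} {ps : List (List L)} {p : List L} {x : L}
    (hp : p ∈ ps) (hx : x ∈ p) : x ∈ joinSep δ ps := by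
  induction ps with
  | nil => simp at hp
  | cons q qs ih =>
    cases qs with
    | nil => simp at hp; subst hp; simpa using hx
    | cons r rs =>
      rw [joinSep_cons δ q (by simp)]
      rcases List.mem_cons.1 hp with h | h
      · subst h; exact List.mem_append.2 (Or.inl hx)
      · exact List.mem_append.2 (Or.inr (List.mem_cons.2 (Or.inr (ih h))))

theorem sep_mem_joinSep {δ : L} {ps : List (List L)} (h : 2 ≤ ps.length) :
    δ ∈ joinSep δ ps := by
  cases ps with
  | nil => simp at h
  | cons p qs =>
    cases qs with
    | nil => simp at h
    | cons q rs => rw [joinSep_cons δ p (by simp)]; simp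

end Worms
set_option linter.unusedSectionVars false

section OrderLems

variable {L : Type} [LinearOrder L]

theorem Lt.trans' {ε : L} {X Y Z : List L} (h1 : Lt ε X Y) (h2 : Lt ε Y Z) : Lt ε X Z := by
  unfold Lt at *
  exact GLP.impTrans h2 (GLP.impTrans (GLP.diaImp ε h1) (GLP.diaTrans ε _))

theorem Le.lt_trans {ε : L} {X Y Z : List L} (h1 : Le ε X Y) (h2 : Lt ε Y Z) : Lt ε X Z := by
  rcases h1 with h1 | rfl
  · exact h1.trans' h2
  · exact h2

theorem Le.trans' {ε : L} {X Y Z : List L} (h1 : Le ε X Y) (h2 : Le ε Y Z) : Le ε X Z := by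
  rcases h2 with h2 | rfl
  · exact Or.inl (h1.lt_trans h2)
  · exact h1

theorem Lt.weaken {γ ε : L} (h : γ ≤ ε) {X Y : List L} (hl : Lt ε X Y) : Lt γ X Y :=
  GLP.impTrans hl (GLP.diaLE h _)

/-- from a `Chain'` ending in `c`, every element is `Le`-below `c`. -/
theorem chain_le_last {ε : L} : ∀ {ta : List (List L)} {c : List L},
    List.Chain' (Le ε) (ta ++ [c]) → ∀ p ∈ ta ++ [c], Le ε p c := by
  intro ta
  induction ta with
  | nil => intro c _ p hp; simp at hp; subst hp; exact Or.inr rfl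
  | cons a ta ih =>
    intro c hch p hp
    have hch' : List.Chain' (Le ε) (ta ++ [c]) := hch.tail
    rcases List.mem_cons.1 hp with rfl | hp'
    · have hhead : Le ε p ((ta ++ [c]).head (by simp)) := by
        have := List.isChain_cons.1 hch
        exact this.1 _ (by simp [List.head?_eq_head])
      have hmem : (ta ++ [c]).head (by simp) ∈ ta ++ [c] := List.head_mem _
      exact hhead.trans' (ih hch' _ hmem)
    · exact ih hch' p hp'

/-- common-prefix decomposition -/
theorem common_prefix {X : Type} : ∀ (l1 l2 : List X),
    l1 = l2 ∨ (∃ c t, l2 = l1 ++ c :: t) ∨ (∃ c t, l1 = l2 ++ c :: t) ∨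
    (∃ s c1 t1 c2 t2, c1 ≠ c2 ∧ l1 = s ++ c1 :: t1 ∧ l2 = s ++ c2 :: t2) := by
  intro l1
  induction l1 with
  | nil =>
    intro l2
    cases l2 with
    | nil => exact Or.inl rfl
    | cons b t => exact Or.inr (Or.inl ⟨b, t, rfl⟩)
  | cons a t1 ih =>
    intro l2
    cases l2 with
    | nil => exact Or.inr (Or.inr (Or.inl ⟨a, t1, rfl⟩))
    | cons b t2 =>
      by_cases hab : a = b
      · subst hab
        rcases ih t2 with rfl | ⟨c, t, rfl⟩ | ⟨c, t, h⟩ | ⟨s, c1, u1, c2, u2, hne, h1, h2⟩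
        · exact Or.inl rfl
        · exact Or.inr (Or.inl ⟨c, t, rfl⟩)
        · exact Or.inr (Or.inr (Or.inl ⟨c, t, by rw [h]; rfl⟩))
        · exact Or.inr (Or.inr (Or.inr ⟨a :: s, c1, u1, c2, u2, hne, by rw [h1]; rfl,
            by rw [h2]; rfl⟩))
      · exact Or.inr (Or.inr (Or.inr ⟨[], a, t1, b, t2, hab, rfl, rfl⟩))

/-- common-suffix decomposition -/
theorem common_suffix {X : Type} (l1 l2 : List X) :
    l1 = l2 ∨ (∃ t c, l2 = t ++ c :: l1) ∨ (∃ t c, l1 = t ++ c :: l2) ∨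
    (∃ t1 c1 t2 c2 s, c1 ≠ c2 ∧ l1 = t1 ++ c1 :: s ∧ l2 = t2 ++ c2 :: s) := by
  rcases common_prefix l1.reverse l2.reverse with h | ⟨c, t, h⟩ | ⟨c, t, h⟩ |
      ⟨s, c1, u1, c2, u2, hne, h1, h2⟩
  · left
    simpa using congrArg List.reverse h
  · right; left
    refine ⟨t.reverse, c, ?_⟩
    have := congrArg List.reverse h
    simpa using this
  · right; right; left
    refine ⟨t.reverse, c, ?_⟩
    have := congrArg List.reverse h
    simpa using this
  · right; right; right
    refine ⟨u1.reverse, c1, u2.reverse, c2, s.reverse, hne, ?_, ?_⟩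
    · have := congrArg List.reverse h1; simpa using this
    · have := congrArg List.reverse h2; simpa using this

end OrderLems
section ChainUp

variable {L : Type} [LinearOrder L]

/-- core step: `C ∧ ⟨δ⟩ψ → ⟨δ⟩(worm p ∧ ⟨δ⟩ψ)` given `C → ⟨ε⟩p`. -/
theorem GLP.chainStep {δ ε : L} (hδε : δ < ε) {C : Formula L} {p : List L}
    (hp : GLP (C.imp (dia ε (worm p)))) (ψ : Formula L) :
    GLP ((C.and (dia δ ψ)).imp (dia δ ((worm p).and (dia δ ψ)))) := by
  have h1 : GLP ((C.and (dia δ ψ)).imp ((dia ε (worm p)).and (dia δ ψ))) :=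
    GLP.impAnd (GLP.impTrans (GLP.andLeft _ _) hp) (GLP.andRight _ _)
  exact GLP.impTrans (GLP.impTrans h1 (GLP.lemJ hδε _ _)) (GLP.diaLE hδε.le _)

/-- G'' with suffix: if `C → ⟨ε⟩p` for every block `p` of `low` then
`C ∧ ⟨δ⟩(worm S) → ⟨δ⟩ worm (joinSep δ low ++ δ::S)`. -/
theorem GLP.chainUp {δ ε : L} (hδε : δ < ε) {C : Formula L} :
    ∀ {low : List (List L)}, low ≠ [] → (∀ p ∈ low, ∀ β ∈ p, δ < β) →
    (∀ p ∈ low, GLP (C.imp (dia ε (worm p)))) → ∀ (S : List L),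
    GLP ((C.and (dia δ (worm S))).imp (dia δ (worm (joinSep δ low ++ δ :: S)))) := by
  intro low
  induction low with
  | nil => intro h; exact absurd rfl h
  | cons p rest ih =>
    intro _ hmods hdia S
    cases rest with
    | nil =>
      have h1 := GLP.chainStep hδε (hdia p (by simp)) (worm S)
      have h2 := GLP.wormSplit (δ := δ) (hmods p (by simp)) S
      simpa using GLP.impTrans h1 (GLP.diaImp δ (GLP.iffMpr h2))
    | cons q qs =>
      have hne : q :: qs ≠ [] := by simp
      have ihr := ih hne (fun r hr => hmods r (by simp [hr]))
        (fun r hr => hdia r (by simp [hr])) S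
      set Wr := worm (joinSep δ (q :: qs) ++ δ :: S) with hWr
      have h0 : GLP ((C.and (dia δ (worm S))).imp (C.and (dia δ Wr))) :=
        GLP.impAnd (GLP.andLeft _ _) ihr
      have h1 := GLP.chainStep hδε (hdia p (by simp)) Wr
      have h2 := GLP.wormSplit (δ := δ) (hmods p (by simp)) (joinSep δ (q :: qs) ++ δ :: S)
      have h3 : GLP ((C.and (dia δ (worm S))).imp
          (dia δ (worm (p ++ δ :: (joinSep δ (q :: qs) ++ δ :: S))))) :=
        GLP.impTrans (GLP.impTrans h0 h1) (GLP.diaImp δ (GLP.iffMpr h2))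
      have heq : p ++ δ :: (joinSep δ (q :: qs) ++ δ :: S)
          = joinSep δ (p :: q :: qs) ++ δ :: S := by
        rw [joinSep_cons δ p (ps := q :: qs) (by simp)]; simp
      rwa [heq] at h3

/-- G'' without suffix. -/
theorem GLP.chainUp0 {δ ε : L} (hδε : δ < ε) {C : Formula L} :
    ∀ {low : List (List L)}, low ≠ [] → (∀ p ∈ low, ∀ β ∈ p, δ < β) →
    (∀ p ∈ low, GLP (C.imp (dia ε (worm p)))) →
    GLP (C.imp (dia δ (worm (joinSep δ low)))) := by
  intro low
  induction low with
  | nil => intro h; exact absurd rfl h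
  | cons p rest ih =>
    intro _ hmods hdia
    cases rest with
    | nil => simpa using GLP.impTrans (hdia p (by simp)) (GLP.diaLE hδε.le _)
    | cons q qs =>
      have ihr := ih (by simp) (fun r hr => hmods r (by simp [hr]))
        (fun r hr => hdia r (by simp [hr]))
      set Wr := worm (joinSep δ (q :: qs)) with hWr
      have h0 : GLP (C.imp (C.and (dia δ Wr))) := GLP.impAnd (GLP.impRefl _) ihr
      have h1 := GLP.chainStep hδε (hdia p (by simp)) Wr
      have h2 := GLP.wormSplit (δ := δ) (hmods p (by simp)) (joinSep δ (q :: qs))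
      have h3 : GLP (C.imp (dia δ (worm (p ++ δ :: joinSep δ (q :: qs))))) :=
        GLP.impTrans (GLP.impTrans h0 h1) (GLP.diaImp δ (GLP.iffMpr h2))
      rwa [← joinSep_cons δ p (ps := q :: qs) (by simp)] at h3

end ChainUp
section RTsec

variable {L : Type} [LinearOrder L]

theorem part_length_le0 (δ : L) (s : List (List L)) (c : List L) :
    c.length ≤ (joinSep δ (c :: s)).length := by
  cases s with
  | nil => simp
  | cons q qs => rw [joinSep_cons δ c (by simp)]; simp

theorem part_length_le (δ : L) (t s : List (List L)) (c : List L) :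
    c.length ≤ (joinSep δ (t ++ c :: s)).length := by
  cases t with
  | nil => simpa using part_length_le0 δ s c
  | cons a t' =>
    rw [joinSep_append δ (by simp) (by simp)]
    have := part_length_le0 δ s c
    simp at this ⊢
    omega

theorem part_length_lt (δ : L) {t s : List (List L)} (c : List L)
    (h : t ≠ [] ∨ s ≠ []) : c.length < (joinSep δ (t ++ c :: s)).length := by
  cases t with
  | nil =>
    rcases h with h | h
    · exact absurd rfl h
    · cases s with
      | nil => exact absurd rfl h
      | cons q qs => rw [List.nil_append, joinSep_cons δ c (by simp)]; simp
  | cons a t' =>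
    rw [joinSep_append δ (by simp) (by simp)]
    have := part_length_le0 δ s c
    simp at this ⊢
    omega

theorem lt_nil {γ : L} {B : List L} (hne : B ≠ []) (hm : ∀ β ∈ B, γ ≤ β) :
    Lt γ ([] : List L) B := by
  cases B with
  | nil => exact absurd rfl hne
  | cons x B' =>
    show GLP ((dia x (worm B')).imp (dia γ Formula.top))
    exact GLP.impTrans (GLP.diaLE (hm x (by simp)) _) (GLP.diaImp γ (GLP.impTop _))

/-- The decisive case: last differing blocks compare strictly. -/
theorem rt_case {δ ε : L} (hδε : δ < ε)
    (t1 t2 : List (List L)) (c1 c2 : List L) (s : List (List L))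
    (hm1 : ∀ p ∈ t1 ++ [c1], ∀ β ∈ p, δ < β)
    (hm2 : ∀ p ∈ t2 ++ c2 :: s, ∀ β ∈ p, δ < β)
    (hch1 : List.Chain' (Le ε) (t1 ++ [c1]))
    (hlt : Lt ε c1 c2) :
    Lt δ (joinSep δ (t1 ++ c1 :: s)) (joinSep δ (t2 ++ c2 :: s)) := by
  have hlow : ∀ p ∈ t1 ++ [c1], GLP ((worm c2).imp (dia ε (worm p))) := by
    intro p hp
    exact (chain_le_last hch1 p hp).lt_trans hlt
  have hAeq : t1 ++ c1 :: s = (t1 ++ [c1]) ++ s := by simp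
  have hlownil : (t1 ++ [c1] : List (List L)) ≠ [] := by simp
  have hc2m : ∀ β ∈ c2, δ < β := hm2 c2 (by simp)
  cases s with
  | nil =>
    have hCb : GLP ((worm c2).imp (dia δ (worm (joinSep δ (t1 ++ [c1]))))) :=
      GLP.chainUp0 hδε hlownil hm1 hlow
    show Lt δ (joinSep δ (t1 ++ [c1])) (joinSep δ (t2 ++ [c2]))
    cases t2 with
    | nil =>
      show GLP ((worm (joinSep δ ([] ++ [c2]))).imp _)
      simpa using hCb
    | cons a t2' =>
      have hBeq : joinSep δ ((a :: t2') ++ [c2]) = joinSep δ (a :: t2') ++ δ :: c2 := by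
        rw [joinSep_append δ (by simp) (by simp)]; simp
      show GLP ((worm (joinSep δ ((a :: t2') ++ [c2]))).imp _)
      rw [hBeq]
      have hmods : ∀ β ∈ joinSep δ (a :: t2'), δ ≤ β := by
        intro β hβ
        rcases mem_joinSep hβ with rfl | ⟨p, hp, hβp⟩
        · exact le_rfl
        · exact (hm2 p (List.mem_append_left _ hp) β hβp).le
      exact GLP.impTrans (GLP.impTrans (GLP.wormSuffix hmods c2)
        (GLP.diaImp δ hCb)) (GLP.diaTrans δ _)
  | cons q qs =>
    set S := joinSep δ (q :: qs) with hS
    have hsne : (q :: qs : List (List L)) ≠ [] := by simp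
    have h2 := GLP.wormSplit (δ := δ) hc2m S
    have hup := GLP.chainUp hδε hlownil hm1 hlow S
    have heqA : joinSep δ ((t1 ++ [c1]) ++ q :: qs) = joinSep δ (t1 ++ [c1]) ++ δ :: S :=
      joinSep_append δ hlownil hsne
    have hCb : GLP ((worm (c2 ++ δ :: S)).imp
        (dia δ (worm (joinSep δ ((t1 ++ [c1]) ++ q :: qs))))) := by
      rw [heqA]
      exact GLP.impTrans (GLP.iffMp h2) hup
    rw [hAeq]
    cases t2 with
    | nil =>
      have hBeq : joinSep δ ([] ++ c2 :: q :: qs) = c2 ++ δ :: S := by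
        rw [List.nil_append, joinSep_cons δ c2 hsne]
      show GLP ((worm (joinSep δ ([] ++ c2 :: q :: qs))).imp _)
      rw [hBeq]; exact hCb
    | cons a t2' =>
      have hBeq : joinSep δ ((a :: t2') ++ c2 :: q :: qs)
          = joinSep δ (a :: t2') ++ δ :: (c2 ++ δ :: S) := by
        rw [joinSep_append δ (by simp) (by simp), joinSep_cons δ c2 hsne]
      show GLP ((worm (joinSep δ ((a :: t2') ++ c2 :: q :: qs))).imp _)
      rw [hBeq]
      have hmods : ∀ β ∈ joinSep δ (a :: t2'), δ ≤ β := by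
        intro β hβ
        rcases mem_joinSep hβ with rfl | ⟨p, hp, hβp⟩
        · exact le_rfl
        · exact (hm2 p (List.mem_append_left _ hp) β hβp).le
      exact GLP.impTrans (GLP.impTrans (GLP.wormSuffix hmods _)
        (GLP.diaImp δ hCb)) (GLP.diaTrans δ _)

end RTsec
section Trich

variable {L : Type} [LinearOrder L] [SuccOrder L]

theorem rt (δ : L) (pa pb : List (List L))
    (hmulti : 2 ≤ pa.length ∨ 2 ≤ pb.length)
    (hane : pa ≠ []) (hbne : pb ≠ [])
    (hma : ∀ p ∈ pa, ∀ β ∈ p, δ < β) (hmb : ∀ p ∈ pb, ∀ β ∈ p, δ < β)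
    (hwa : ∀ p ∈ pa, WNF p) (hwb : ∀ p ∈ pb, WNF p)
    (hca : List.Chain' (Le (Order.succ δ)) pa) (hcb : List.Chain' (Le (Order.succ δ)) pb)
    (iht : ∀ X Y : List L,
      X.length + Y.length < (joinSep δ pa).length + (joinSep δ pb).length →
      WNF X → WNF Y → ∀ γ : L, (∀ β ∈ X, γ ≤ β) → (∀ β ∈ Y, γ ≤ β) →
      X = Y ∨ Lt γ X Y ∨ Lt γ Y X) :
    joinSep δ pa = joinSep δ pb ∨ Lt δ (joinSep δ pa) (joinSep δ pb) ∨
      Lt δ (joinSep δ pb) (joinSep δ pa) := by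
  rcases common_suffix pa pb with rfl | ⟨t, c, rfl⟩ | ⟨t, c, rfl⟩ |
      ⟨t1, c1, t2, c2, s, hne, rfl, rfl⟩
  · exact Or.inl rfl
  · -- pb = t ++ c :: pa : A is a proper suffix of B
    right; left
    have heq : t ++ c :: pa = (t ++ [c]) ++ pa := by simp
    rw [heq, joinSep_append δ (by simp) hane]
    refine GLP.wormSuffix ?_ _
    intro β hβ
    rcases mem_joinSep hβ with rfl | ⟨p, hp, hβp⟩
    · exact le_rfl
    · refine (hmb p ?_ β hβp).le
      rcases List.mem_append.1 hp with h | h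
      · exact List.mem_append_left _ h
      · simp at h; subst h; simp
  · -- pa = t ++ c :: pb
    right; right
    have heq : t ++ c :: pb = (t ++ [c]) ++ pb := by simp
    rw [heq, joinSep_append δ (by simp) hbne]
    refine GLP.wormSuffix ?_ _
    intro β hβ
    rcases mem_joinSep hβ with rfl | ⟨p, hp, hβp⟩
    · exact le_rfl
    · refine (hma p ?_ β hβp).le
      rcases List.mem_append.1 hp with h | h
      · exact List.mem_append_left _ h
      · simp at h; subst h; simp
  · -- the decisive case
    have hc1mem : c1 ∈ t1 ++ c1 :: s := by simp
    have hc2mem : c2 ∈ t2 ++ c2 :: s := by simp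
    have hδε : δ < Order.succ δ := by
      cases c1 with
      | nil =>
        cases c2 with
        | nil => exact absurd rfl hne
        | cons y c2' =>
          exact Order.lt_succ_of_not_isMax (hmb _ hc2mem y (by simp)).not_isMax
      | cons x c1' =>
        exact Order.lt_succ_of_not_isMax (hma _ hc1mem x (by simp)).not_isMax
    have hlensum : c1.length + c2.length <
        (joinSep δ (t1 ++ c1 :: s)).length + (joinSep δ (t2 ++ c2 :: s)).length := by
      by_cases h1 : t1 = [] ∧ s = []
      · obtain ⟨rfl, rfl⟩ := h1
        have hlb : 2 ≤ (t2 ++ c2 :: ([] : List (List L))).length := by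
          rcases hmulti with h | h
          · simp at h
          · exact h
        have ht2 : t2 ≠ [] := by
          intro h; subst h; simp at hlb
        have hstrict := part_length_lt δ (s := []) c2 (Or.inl ht2)
        have hle : c1.length ≤ (joinSep δ ([] ++ c1 :: ([] : List (List L)))).length := by
          simp
        omega
      · have hstrict := part_length_lt δ c1 (not_and_or.1 h1)
        have hle := part_length_le δ t2 s c2
        omega
    have := iht c1 c2 hlensum (hwa _ hc1mem) (hwb _ hc2mem) (Order.succ δ)
      (fun β hβ => Order.succ_le_of_lt (hma _ hc1mem β hβ))
      (fun β hβ => Order.succ_le_of_lt (hmb _ hc2mem β hβ))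
    have hmemlift : ∀ (t : List (List L)) (c : List L) (s' : List (List L)) (p : List L),
        p ∈ t ++ [c] → p ∈ t ++ c :: s' := by
      intro t c s' p hp
      rcases List.mem_append.1 hp with h | h
      · exact List.mem_append_left _ h
      · simp at h; subst h; simp
    have hcha : List.Chain' (Le (Order.succ δ)) (t1 ++ [c1]) := by
      refine hca.prefix ⟨s, by simp⟩
    have hchb : List.Chain' (Le (Order.succ δ)) (t2 ++ [c2]) := by
      refine hcb.prefix ⟨s, by simp⟩
    rcases this with heq | hlt | hlt
    · exact absurd heq hne
    · right; left
      exact rt_case hδε t1 t2 c1 c2 s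
        (fun p hp => hma p (hmemlift _ _ _ _ hp)) hmb hcha hlt
    · right; right
      exact rt_case hδε t2 t1 c2 c1 s
        (fun p hp => hmb p (hmemlift _ _ _ _ hp)) hma hchb hlt

end Trich
section TrichMain

variable {L : Type} [LinearOrder L] [SuccOrder L]

theorem trich : ∀ (N : ℕ) (A B : List L), A.length + B.length ≤ N → WNF A → WNF B →
    ∀ γ : L, (∀ β ∈ A, γ ≤ β) → (∀ β ∈ B, γ ≤ β) →
    A = B ∨ Lt γ A B ∨ Lt γ B A := by
  intro N
  induction N with
  | zero =>
    intro A B hlen _ _ γ _ _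
    left
    have hA0 : A = [] := List.eq_nil_of_length_eq_zero (by omega)
    have hB0 : B = [] := List.eq_nil_of_length_eq_zero (by omega)
    rw [hA0, hB0]
  | succ N ih =>
    intro A B hlen hA hB γ hγA hγB
    cases hA with
    | nil =>
      cases hB with
      | nil => exact Or.inl rfl
      | node δb pbs hlb hmb hwb hob =>
        exact Or.inr (Or.inl (lt_nil (List.ne_nil_of_mem (sep_mem_joinSep hlb)) hγB))
    | node δa pas hla hma hwa hoa =>
      cases hB with
      | nil =>
        exact Or.inr (Or.inr (lt_nil (List.ne_nil_of_mem (sep_mem_joinSep hla)) hγA))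
      | node δb pbs hlb hmb hwb hob =>
        have hγa : γ ≤ δa := hγA δa (sep_mem_joinSep hla)
        have hγb : γ ≤ δb := hγB δb (sep_mem_joinSep hlb)
        have hpas : pas ≠ [] := by intro h; rw [h] at hla; simp at hla
        have hpbs : pbs ≠ [] := by intro h; rw [h] at hlb; simp at hlb
        rcases lt_trichotomy δa δb with hd | rfl | hd
        · -- δa < δb : B is a single block at level δa
          have hBw : WNF (joinSep δb pbs) := WNF.node δb pbs hlb hmb hwb hob
          have hmB : ∀ p ∈ [joinSep δb pbs], ∀ β ∈ p, δa < β := by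
            intro p hp β hβ
            simp at hp; subst hp
            rcases mem_joinSep hβ with rfl | ⟨q, hq, hβq⟩
            · exact hd
            · exact hd.trans (hmb q hq β hβq)
          have call := rt δa pas [joinSep δb pbs] (Or.inl hla) hpas (by simp)
            hma hmB hwa (by intro p hp; simp at hp; subst hp; exact hBw)
            hoa (List.isChain_singleton _)
            (by
              intro X Y hxy hX hY
              refine ih X Y ?_ hX hY
              simp only [joinSep_single] at hxy
              omega)
          simp only [joinSep_single] at call
          rcases call with h | h | h
          · exact Or.inl h
          · exact Or.inr (Or.inl (h.weaken hγa))
          · exact Or.inr (Or.inr (h.weaken hγa))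
        · -- equal separators
          have call := rt δa pas pbs (Or.inl hla) hpas hpbs hma hmb hwa hwb hoa hob
            (by intro X Y hxy hX hY; exact ih X Y (by omega) hX hY)
          rcases call with h | h | h
          · exact Or.inl h
          · exact Or.inr (Or.inl (h.weaken hγa))
          · exact Or.inr (Or.inr (h.weaken hγa))
        · -- δb < δa : A is a single block at level δb
          have hAw : WNF (joinSep δa pas) := WNF.node δa pas hla hma hwa hoa
          have hmA : ∀ p ∈ [joinSep δa pas], ∀ β ∈ p, δb < β := by
            intro p hp β hβ
            simp at hp; subst hp
            rcases mem_joinSep hβ with rfl | ⟨q, hq, hβq⟩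
            · exact hd
            · exact hd.trans (hma q hq β hβq)
          have call := rt δb [joinSep δa pas] pbs (Or.inr hlb) (by simp) hpbs
            hmA hmb (by intro p hp; simp at hp; subst hp; exact hAw) hwb
            (List.isChain_singleton _) hob
            (by
              intro X Y hxy hX hY
              refine ih X Y ?_ hX hY
              simp only [joinSep_single] at hxy
              omega)
          simp only [joinSep_single] at call
          rcases call with h | h | h
          · exact Or.inl h
          · exact Or.inr (Or.inl (h.weaken hγb))
          · exact Or.inr (Or.inr (h.weaken hγb))

end TrichMain
section PropMore

variable {L : Type} [LinearOrder L]

theorem GLP.iffRefl (φ : Formula L) : GLP (φ.iff φ) :=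
  GLP.iffIntro (GLP.impRefl _) (GLP.impRefl _)

theorem GLP.andCongr {φ φ' ψ ψ' : Formula L}
    (h1 : GLP (φ.iff φ')) (h2 : GLP (ψ.iff ψ')) :
    GLP ((φ.and ψ).iff (φ'.and ψ')) := by
  refine GLP.iffIntro ?_ ?_
  · exact GLP.impAnd (GLP.impTrans (GLP.andLeft _ _) (GLP.iffMp h1))
      (GLP.impTrans (GLP.andRight _ _) (GLP.iffMp h2))
  · exact GLP.impAnd (GLP.impTrans (GLP.andLeft _ _) (GLP.iffMpr h1))
      (GLP.impTrans (GLP.andRight _ _) (GLP.iffMpr h2))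

theorem GLP.iffTopAnd (ψ : Formula L) : GLP ((Formula.top.and ψ).iff ψ) :=
  GLP.iffIntro (GLP.andRight _ _) (GLP.impAnd (GLP.impTop _) (GLP.impRefl _))

theorem GLP.iffAndTop (ψ : Formula L) : GLP ((ψ.and Formula.top).iff ψ) :=
  GLP.iffIntro (GLP.andLeft _ _) (GLP.impAnd (GLP.impRefl _) (GLP.impTop _))

/-- `(φ∧χ)∧ψ ↔ (φ∧ψ)∧χ` -/
theorem GLP.andRotate (φ χ ψ : Formula L) :
    GLP (((φ.and χ).and ψ).iff ((φ.and ψ).and χ)) := by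
  refine GLP.iffIntro ?_ ?_
  · exact GLP.impAnd
      (GLP.impAnd (GLP.impTrans (GLP.andLeft _ _) (GLP.andLeft _ _)) (GLP.andRight _ _))
      (GLP.impTrans (GLP.andLeft _ _) (GLP.andRight _ _))
  · exact GLP.impAnd
      (GLP.impAnd (GLP.impTrans (GLP.andLeft _ _) (GLP.andLeft _ _)) (GLP.andRight _ _))
      (GLP.impTrans (GLP.andLeft _ _) (GLP.andRight _ _))

/-- `φ∧(ψ∧χ) ↔ (φ∧ψ)∧χ` -/
theorem GLP.andAssoc1 (φ ψ χ : Formula L) :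
    GLP ((φ.and (ψ.and χ)).iff ((φ.and ψ).and χ)) := by
  refine GLP.iffIntro ?_ ?_
  · exact GLP.impAnd
      (GLP.impAnd (GLP.andLeft _ _) (GLP.impTrans (GLP.andRight _ _) (GLP.andLeft _ _)))
      (GLP.impTrans (GLP.andRight _ _) (GLP.andRight _ _))
  · exact GLP.impAnd (GLP.impTrans (GLP.andLeft _ _) (GLP.andLeft _ _))
      (GLP.impAnd (GLP.impTrans (GLP.andLeft _ _) (GLP.andRight _ _)) (GLP.andRight _ _))

/-- merge: `(φ∧x)∧(ψ∧y) ↔ (φ∧ψ)∧z` given `x∧y ↔ z`. -/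
theorem GLP.andMerge {x y z : Formula L} (φ ψ : Formula L)
    (hf : GLP ((x.and y).iff z)) :
    GLP (((φ.and x).and (ψ.and y)).iff ((φ.and ψ).and z)) := by
  refine GLP.iffIntro ?_ ?_
  · refine GLP.impAnd (GLP.impAnd
      (GLP.impTrans (GLP.andLeft _ _) (GLP.andLeft _ _))
      (GLP.impTrans (GLP.andRight _ _) (GLP.andLeft _ _))) ?_
    refine GLP.impTrans ?_ (GLP.iffMp hf)
    exact GLP.impAnd (GLP.impTrans (GLP.andLeft _ _) (GLP.andRight _ _))
      (GLP.impTrans (GLP.andRight _ _) (GLP.andRight _ _))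
  · have hz : GLP (((φ.and ψ).and z).imp (x.and y)) :=
      GLP.impTrans (GLP.andRight _ _) (GLP.iffMpr hf)
    refine GLP.impAnd (GLP.impAnd
      (GLP.impTrans (GLP.andLeft _ _) (GLP.andLeft _ _))
      (GLP.impTrans hz (GLP.andLeft _ _))) (GLP.impAnd
      (GLP.impTrans (GLP.andLeft _ _) (GLP.andRight _ _))
      (GLP.impTrans hz (GLP.andRight _ _)))

end PropMore

section WNFHelp

variable {L : Type} [LinearOrder L] [SuccOrder L]

theorem wnf_joinSep {δ : L} {parts : List (List L)} (hne : parts ≠ [])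
    (hm : ∀ p ∈ parts, ∀ β ∈ p, δ < β) (hw : ∀ p ∈ parts, WNF p)
    (hc : List.Chain' (Le (Order.succ δ)) parts) : WNF (joinSep δ parts) := by
  cases parts with
  | nil => exact absurd rfl hne
  | cons r rs =>
    cases rs with
    | nil => simpa using hw r (by simp)
    | cons u us => exact WNF.node δ _ (by simp) hm hw hc

end WNFHelp
section MainConj

variable {L : Type} [LinearOrder L] [SuccOrder L]

theorem conjMain : ∀ (N : ℕ) (α : L) (A B : List L), A.length + B.length ≤ N →
    (∀ β ∈ A, α ≤ β) → (∀ β ∈ B, α ≤ β) → WNF A → WNF B →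
    ∃ C : List L, (∀ β ∈ C, α ≤ β) ∧ GLP (((worm A).and (worm B)).iff (worm C)) ∧
      (∀ β ∈ C, β ∈ A ++ B) ∧ C.length ≤ A.length + B.length := by
  intro N
  induction N with
  | zero =>
    intro α A B hlen hAm hBm hA hB
    have hA0 : A = [] := List.eq_nil_of_length_eq_zero (by omega)
    have hB0 : B = [] := List.eq_nil_of_length_eq_zero (by omega)
    subst hA0; subst hB0
    exact ⟨[], by simp, GLP.iffTopAnd _, by simp, by simp⟩
  | succ N ih =>
    intro α A B hlen hAm hBm hA hB
    cases hA with
    | nil =>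
      exact ⟨B, hBm, GLP.iffTopAnd _, by simp, by simp⟩
    | node δa pas hla hma' hwa hoa =>
      cases hB with
      | nil =>
        exact ⟨joinSep δa pas, hAm, GLP.iffAndTop _, by simp, by simp⟩
      | node δb pbs hlb hmb' hwb hob =>
        cases pas with
        | nil => simp at hla
        | cons p ps =>
        cases pbs with
        | nil => simp at hlb
        | cons q qs =>
        have hps : ps ≠ [] := by intro h; subst h; simp at hla
        have hqs : qs ≠ [] := by intro h; subst h; simp at hlb
        set RA := joinSep δa ps with hRAdef
        set RB := joinSep δb qs with hRBdef
        have hAeq : joinSep δa (p :: ps) = p ++ δa :: RA := joinSep_cons δa p hps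
        have hBeq : joinSep δb (q :: qs) = q ++ δb :: RB := joinSep_cons δb q hqs
        have hmp : ∀ β ∈ p, δa < β := hma' p (by simp)
        have hmq : ∀ β ∈ q, δb < β := hmb' q (by simp)
        have hsplitA := GLP.wormSplit hmp RA
        have hsplitB := GLP.wormSplit hmq RB
        have hlenA : (joinSep δa (p :: ps)).length = p.length + 1 + RA.length := by
          rw [hAeq]; simp; omega
        have hlenB : (joinSep δb (q :: qs)).length = q.length + 1 + RB.length := by
          rw [hBeq]; simp; omega
        have hmemRA : ∀ β ∈ RA, β ∈ joinSep δa (p :: ps) := by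
          intro β hβ; rw [hAeq]; exact List.mem_append_right _ (by simp [hβ])
        have hmemRB : ∀ β ∈ RB, β ∈ joinSep δb (q :: qs) := by
          intro β hβ; rw [hBeq]; exact List.mem_append_right _ (by simp [hβ])
        have hmemp : ∀ β ∈ p, β ∈ joinSep δa (p :: ps) := by
          intro β hβ; rw [hAeq]; exact List.mem_append_left _ hβ
        have hmemq : ∀ β ∈ q, β ∈ joinSep δb (q :: qs) := by
          intro β hβ; rw [hBeq]; exact List.mem_append_left _ hβ
        rcases lt_trichotomy δa δb with hd | hdeq | hd
        · -- δa < δb : absorb all of B into the first block of A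
          have hBw : WNF (joinSep δb (q :: qs)) := WNF.node δb _ hlb hmb' hwb hob
          obtain ⟨C1, hC1m, hC1iff, hC1mem, hC1len⟩ :=
            ih α p (joinSep δb (q :: qs)) (by omega)
              (fun β hβ => hAm β (hmemp β hβ)) hBm (hwa p (by simp)) hBw
          have hC1δ : ∀ β ∈ C1, δa < β := by
            intro β hβ
            rcases List.mem_append.1 (hC1mem β hβ) with h | h
            · exact hmp β h
            · rcases mem_joinSep h with rfl | ⟨r, hr, hβr⟩
              · exact hd
              · exact hd.trans (hmb' r hr β hβr)
          have hsplitC := GLP.wormSplit hC1δ RA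
          refine ⟨C1 ++ δa :: RA, ?_, ?_, ?_, ?_⟩
          · intro β hβ
            rcases List.mem_append.1 hβ with h | h
            · rcases List.mem_append.1 (hC1mem β h) with h' | h'
              · exact hAm β (hmemp β h')
              · exact hBm β h'
            · rcases List.mem_cons.1 h with rfl | h'
              · exact hAm β (sep_mem_joinSep hla)
              · exact hAm β (hmemRA β h')
          · rw [hAeq]
            refine GLP.iffTrans (GLP.andCongr hsplitA (GLP.iffRefl _)) ?_
            refine GLP.iffTrans (GLP.andRotate _ _ _) ?_
            refine GLP.iffTrans (GLP.andCongr hC1iff (GLP.iffRefl _)) ?_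
            exact GLP.iffSymm hsplitC
          · intro β hβ
            rcases List.mem_append.1 hβ with h | h
            · rcases List.mem_append.1 (hC1mem β h) with h' | h'
              · exact List.mem_append_left _ (hmemp β h')
              · exact List.mem_append_right _ h'
            · rcases List.mem_cons.1 h with rfl | h'
              · exact List.mem_append_left _ (sep_mem_joinSep hla)
              · exact List.mem_append_left _ (hmemRA β h')
          · have : (C1 ++ δa :: RA).length = C1.length + 1 + RA.length := by simp; omega
            omega
        · -- equal separators
          subst hdeq
          have hRAw : WNF RA := wnf_joinSep hps
            (fun r hr => hma' r (by simp [hr])) (fun r hr => hwa r (by simp [hr])) hoa.tail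
          have hRBw : WNF RB := wnf_joinSep hqs
            (fun r hr => hmb' r (by simp [hr])) (fun r hr => hwb r (by simp [hr])) hob.tail
          have hRAm : ∀ β ∈ RA, δa ≤ β := by
            intro β hβ
            rcases mem_joinSep hβ with rfl | ⟨r, hr, hβr⟩
            · exact le_rfl
            · exact (hma' r (by simp [hr]) β hβr).le
          have hRBm : ∀ β ∈ RB, δa ≤ β := by
            intro β hβ
            rcases mem_joinSep hβ with rfl | ⟨r, hr, hβr⟩
            · exact le_rfl
            · exact (hmb' r (by simp [hr]) β hβr).le
          have htri := trich (RA.length + RB.length) RA RB le_rfl hRAw hRBw δa hRAm hRBm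
          have hK : ∃ K : List L,
              GLP (((dia δa (worm RA)).and (dia δa (worm RB))).iff (dia δa (worm K))) ∧
              (∀ β ∈ K, β ∈ RA ++ RB) ∧ K.length ≤ RA.length + RB.length := by
            rcases htri with heq | hlt | hlt
            · refine ⟨RB, ?_, fun β hβ => List.mem_append_right _ hβ, by omega⟩
              rw [heq]
              exact GLP.iffIntro (GLP.andRight _ _)
                (GLP.impAnd (GLP.impRefl _) (GLP.impRefl _))
            · refine ⟨RB, ?_, fun β hβ => List.mem_append_right _ hβ, by omega⟩
              refine GLP.iffIntro (GLP.andRight _ _)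
                (GLP.impAnd ?_ (GLP.impRefl _))
              exact GLP.impTrans (GLP.diaImp δa hlt) (GLP.diaTrans δa _)
            · refine ⟨RA, ?_, fun β hβ => List.mem_append_left _ hβ, by omega⟩
              refine GLP.iffIntro (GLP.andLeft _ _)
                (GLP.impAnd (GLP.impRefl _) ?_)
              exact GLP.impTrans (GLP.diaImp δa hlt) (GLP.diaTrans δa _)
          obtain ⟨K, hKiff, hKmem, hKlen⟩ := hK
          obtain ⟨C1, hC1m, hC1iff, hC1mem, hC1len⟩ :=
            ih α p q (by omega) (fun β hβ => hAm β (hmemp β hβ))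
              (fun β hβ => hBm β (hmemq β hβ)) (hwa p (by simp)) (hwb q (by simp))
          have hC1δ : ∀ β ∈ C1, δa < β := by
            intro β hβ
            rcases List.mem_append.1 (hC1mem β hβ) with h | h
            · exact hmp β h
            · exact hmq β h
          have hsplitC := GLP.wormSplit hC1δ K
          refine ⟨C1 ++ δa :: K, ?_, ?_, ?_, ?_⟩
          · intro β hβ
            rcases List.mem_append.1 hβ with h | h
            · rcases List.mem_append.1 (hC1mem β h) with h' | h'
              · exact hAm β (hmemp β h')
              · exact hBm β (hmemq β h')
            · rcases List.mem_cons.1 h with rfl | h'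
              · exact hAm β (sep_mem_joinSep hla)
              · rcases List.mem_append.1 (hKmem β h') with h'' | h''
                · exact hAm β (hmemRA β h'')
                · exact hBm β (hmemRB β h'')
          · rw [hAeq, hBeq]
            refine GLP.iffTrans (GLP.andCongr hsplitA hsplitB) ?_
            refine GLP.iffTrans (GLP.andMerge _ _ hKiff) ?_
            refine GLP.iffTrans (GLP.andCongr hC1iff (GLP.iffRefl _)) ?_
            exact GLP.iffSymm hsplitC
          · intro β hβ
            rcases List.mem_append.1 hβ with h | h
            · rcases List.mem_append.1 (hC1mem β h) with h' | h'
              · exact List.mem_append_left _ (hmemp β h')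
              · exact List.mem_append_right _ (hmemq β h')
            · rcases List.mem_cons.1 h with rfl | h'
              · exact List.mem_append_left _ (sep_mem_joinSep hla)
              · rcases List.mem_append.1 (hKmem β h') with h'' | h''
                · exact List.mem_append_left _ (hmemRA β h'')
                · exact List.mem_append_right _ (hmemRB β h'')
          · have : (C1 ++ δa :: K).length = C1.length + 1 + K.length := by simp; omega
            omega
        · -- δb < δa : absorb all of A into the first block of B
          have hAw : WNF (joinSep δa (p :: ps)) := WNF.node δa _ hla hma' hwa hoa
          obtain ⟨C1, hC1m, hC1iff, hC1mem, hC1len⟩ :=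
            ih α (joinSep δa (p :: ps)) q (by omega)
              hAm (fun β hβ => hBm β (hmemq β hβ)) hAw (hwb q (by simp))
          have hC1δ : ∀ β ∈ C1, δb < β := by
            intro β hβ
            rcases List.mem_append.1 (hC1mem β hβ) with h | h
            · rcases mem_joinSep h with rfl | ⟨r, hr, hβr⟩
              · exact hd
              · exact hd.trans (hma' r hr β hβr)
            · exact hmq β h
          have hsplitC := GLP.wormSplit hC1δ RB
          refine ⟨C1 ++ δb :: RB, ?_, ?_, ?_, ?_⟩
          · intro β hβ
            rcases List.mem_append.1 hβ with h | h
            · rcases List.mem_append.1 (hC1mem β h) with h' | h'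
              · exact hAm β h'
              · exact hBm β (hmemq β h')
            · rcases List.mem_cons.1 h with rfl | h'
              · exact hBm β (sep_mem_joinSep hlb)
              · exact hBm β (hmemRB β h')
          · rw [hBeq]
            refine GLP.iffTrans (GLP.andCongr (GLP.iffRefl _) hsplitB) ?_
            refine GLP.iffTrans (GLP.andAssoc1 _ _ _) ?_
            refine GLP.iffTrans (GLP.andCongr hC1iff (GLP.iffRefl _)) ?_
            exact GLP.iffSymm hsplitC
          · intro β hβ
            rcases List.mem_append.1 hβ with h | h
            · rcases List.mem_append.1 (hC1mem β h) with h' | h'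
              · exact List.mem_append_left _ h'
              · exact List.mem_append_right _ (hmemq β h')
            · rcases List.mem_cons.1 h with rfl | h'
              · exact List.mem_append_right _ (sep_mem_joinSep hlb)
              · exact List.mem_append_right _ (hmemRB β h')
          · have : (C1 ++ δb :: RB).length = C1.length + 1 + RB.length := by simp; omega
            omega

end MainConj
/-- For `A, B ∈ 𝕎°_α` there is a worm `C ∈ 𝕎_α` with `GLP ⊢ (A ∧ B) ↔ C`,
whose modalities are among those of `A` and `B` and whose length is at most
`l(A) + l(B)`. -/
theorem worm_conjunction {L : Type} [LinearOrder L] [SuccOrder L] (α : L)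
    (A B : List L)
    (hAm : ∀ β ∈ A, α ≤ β) (hBm : ∀ β ∈ B, α ≤ β)
    (hA : WNF A) (hB : WNF B) :
    ∃ C : List L, (∀ β ∈ C, α ≤ β) ∧
      GLP (((worm A).and (worm B)).iff (worm C)) ∧
      (∀ β ∈ C, β ∈ A ++ B) ∧
      C.length ≤ A.length + B.length := by
  exact conjMain (A.length + B.length) α A B le_rfl hAm hBm hA hB
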